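/- arXiv:1108.0781 — 3 statements merged into one kernel-verified Lean document; each statement's English description precedes it below -/
import Mathlib

section
/- For every element x of the group ring Z/2Z[Q8], x⁴ equals the sum of the coefficients of x times the identity; that is, writing x = Σ_{g ∈ Q8} α_g · g with α_g ∈ Z/2Z, one has x⁴ = (Σ_g α_g) · 1. -/
namespace Z2Q8Aux

open MonoidAlgebra

abbrev G := QuaternionGroup 2
abbrev A := MonoidAlgebra (ZMod 2) G

noncomputable def zc : A := single (QuaternionGroup.a 2) 1

lemma two_z : (2 : ZMod 2) = 0 := by decide

lemma self_add_self (v : A) : v + v = 0 := by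
  rw [← two_smul (ZMod 2), two_z, zero_smul]

lemma a2_comm : ∀ g : G, QuaternionGroup.a 2 * g = g * QuaternionGroup.a 2 := by decide

lemma zc_comm (u : A) : zc * u = u * zc := by
  induction u using MonoidAlgebra.induction with
  | zero => simp
  | single_add g r f _ _ ih =>
    have e : (single g r : A) = single g r := rfl
    rw [mul_add, add_mul, ih, zc, single_mul_single, single_mul_single, a2_comm,
      one_mul, mul_one]

lemma zc_sq : zc * zc = 1 := by
  rw [zc, single_mul_single, one_mul,
    (by decide : (QuaternionGroup.a 2 : G) * QuaternionGroup.a 2 = 1), MonoidAlgebra.one_def]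

/-- membership in the ideal (1+z)A -/
def P (u : A) : Prop := ∃ w : A, u = (1 + zc) * w

lemma P_zero : P 0 := ⟨0, by simp⟩

lemma P_add {u v : A} (hu : P u) (hv : P v) : P (u + v) := by
  obtain ⟨w, rfl⟩ := hu; obtain ⟨w', rfl⟩ := hv
  exact ⟨w + w', by rw [mul_add]⟩

lemma swap_single (g h : G) (r s : ZMod 2) :
    P (single g r * single h s + single h s * single g r) := by
  rw [single_mul_single, single_mul_single, mul_comm s r]
  rcases (by decide : ∀ g h : G, g*h = h*g ∨ h*g = QuaternionGroup.a 2 * (g*h)) g h with hc | hc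
  · rw [hc]
    exact ⟨0, by rw [mul_zero, self_add_self]⟩
  · refine ⟨single (g*h) (r*s), ?_⟩
    rw [hc, add_mul, one_mul, zc, single_mul_single, one_mul, add_comm]

lemma swap (u v : A) : P (u * v + v * u) := by
  induction u using MonoidAlgebra.induction with
  | zero => simpa using P_zero
  | single_add g r f _ _ ih =>
    have key : ∀ w : A, P (single g r * w + w * single g r) := by
      intro w
      induction w using MonoidAlgebra.induction with
      | zero => simpa using P_zero
      | single_add g' r' f' _ _ ih' =>
        have e : (single g' r' : A) = single g' r' := rfl
        have h := P_add (swap_single g g' r r') ih'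
        rw [mul_add, add_mul]
        convert h using 1
        abel
    have e : (single g r : A) = single g r := rfl
    rw [add_mul, mul_add]
    have h := P_add (key v) ih
    convert h using 1
    abel

lemma square (y : A) : P (y * y + (∑ g : G, y.coeff g) • 1) := by
  induction y using MonoidAlgebra.induction with
  | zero => simpa using P_zero
  | single_add g r f _ _ ih =>
    have e : (single g r : A) = single g r := rfl
    have hsum : (∑ h : G, (single g r + f).coeff h) = r + ∑ h : G, f.coeff h := by
      simp [coeff_add, coeff_single, Finsupp.add_apply, Finset.sum_add_distrib, Finsupp.single_apply]
    rw [hsum, add_smul]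
    have hsq : P (single g r * single g r + r • (1:A)) := by
      rw [single_mul_single]
      rw [(by decide : ∀ t : ZMod 2, t * t = t) r]
      rcases (by decide : ∀ g : G, g*g = 1 ∨ g*g = QuaternionGroup.a 2) g with hc | hc
      · rw [hc]
        refine ⟨0, ?_⟩
        have h1 : (single (1:G) r : A) = r • 1 := by
          rw [MonoidAlgebra.one_def, MonoidAlgebra.smul_single, smul_eq_mul, mul_one]
        rw [h1, mul_zero, self_add_self]
      · rw [hc]
        refine ⟨r • 1, ?_⟩
        have h2 : (single (QuaternionGroup.a 2) r : A) = r • zc := by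
          rw [zc, MonoidAlgebra.smul_single, smul_eq_mul, mul_one]
        rw [h2, add_mul, one_mul, mul_smul_comm, mul_one, add_comm]
    have h := P_add (P_add hsq (swap (single g r) f)) ih
    convert h using 1
    rw [add_mul, mul_add, mul_add]
    abel

lemma one_add_zc_sq : ((1:A) + zc) * (1 + zc) = 0 := by
  rw [add_mul, mul_add, mul_add, zc_sq]
  simp only [one_mul, mul_one]
  rw [show (1:A) + zc + (zc + 1) = (1 + 1) + (zc + zc) by abel,
    self_add_self, self_add_self, add_zero]

end Z2Q8Aux

theorem z2_q8_fourth_power_eq_coeff_sum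
    (x : MonoidAlgebra (ZMod 2) (QuaternionGroup 2)) :
    x ^ 4 = (∑ g : QuaternionGroup 2, x.coeff g) •
      (1 : MonoidAlgebra (ZMod 2) (QuaternionGroup 2)) := by
  obtain ⟨w, hw⟩ := Z2Q8Aux.square x
  set s : ZMod 2 := ∑ g : QuaternionGroup 2, x.coeff g with hs
  have hx2 : x * x = s • 1 + (1 + Z2Q8Aux.zc) * w := by
    have h1 : x * x = (x * x + s • 1) + s • 1 := by
      rw [add_assoc, Z2Q8Aux.self_add_self, add_zero]
    rw [h1, hw, add_comm]
  have hx4 : x ^ 4 = (x * x) * (x * x) := by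
    rw [show (4:ℕ) = 2 * 2 from rfl, pow_mul, pow_two, pow_two]
  rw [hx4, hx2]
  have hcomm : ∀ u : MonoidAlgebra (ZMod 2) (QuaternionGroup 2),
      (1 + Z2Q8Aux.zc) * u = u * (1 + Z2Q8Aux.zc) := by
    intro u; rw [add_mul, mul_add, one_mul, mul_one, Z2Q8Aux.zc_comm]
  have hz2 : ((1 + Z2Q8Aux.zc) * w) * ((1 + Z2Q8Aux.zc) * w) = 0 := by
    rw [← mul_assoc, mul_assoc ((1:MonoidAlgebra (ZMod 2) (QuaternionGroup 2)) + Z2Q8Aux.zc) w,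
      ← hcomm, ← mul_assoc, Z2Q8Aux.one_add_zc_sq, zero_mul, zero_mul]
  rw [add_mul, mul_add, mul_add, hz2, add_zero, smul_mul_assoc, one_mul,
    smul_mul_assoc, one_mul, mul_smul_comm, mul_one, add_assoc,
    Z2Q8Aux.self_add_self, add_zero, smul_smul,
    (by decide : ∀ t : ZMod 2, t * t = t) s]
end

section
/- An element x of the group ring Z/2Z[Q8] is a unit if and only if the sum of its coefficients equals 1 in Z/2Z; and x is a zero divisor (or zero) if and only if the sum of its coefficients equals 0. -/
namespace Z2Q8Aux

abbrev Q8 := QuaternionGroup 2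
abbrev MA := MonoidAlgebra (ZMod 2) Q8

def convE (f g : Q8 → ZMod 2) : Q8 → ZMod 2 := fun t =>
  f (.a 0) * g ((QuaternionGroup.a 0)⁻¹ * t) + f (.a 1) * g ((QuaternionGroup.a 1)⁻¹ * t) +
  f (.a 2) * g ((QuaternionGroup.a 2)⁻¹ * t) + f (.a 3) * g ((QuaternionGroup.a 3)⁻¹ * t) +
  f (.xa 0) * g ((QuaternionGroup.xa 0)⁻¹ * t) + f (.xa 1) * g ((QuaternionGroup.xa 1)⁻¹ * t) +
  f (.xa 2) * g ((QuaternionGroup.xa 2)⁻¹ * t) + f (.xa 3) * g ((QuaternionGroup.xa 3)⁻¹ * t)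

def e8 : Fin 8 ≃ Q8 where
  toFun i := if i.val < 4 then .a i.val else .xa (i.val - 4)
  invFun t := match t with
    | .a i => (Fin.ofNat 8 i.val : Fin 8)
    | .xa i => (Fin.ofNat 8 (i.val + 4 : ℕ) : Fin 8)
  left_inv := by decide
  right_inv := by decide

lemma sum_expand {M : Type*} [AddCommMonoid M] (F : Q8 → M) :
    ∑ g : Q8, F g = F (.a 0) + F (.a 1) + F (.a 2) + F (.a 3)
      + F (.xa 0) + F (.xa 1) + F (.xa 2) + F (.xa 3) := by
  rw [← Equiv.sum_comp e8 F, Fin.sum_univ_eight]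
  have h0 : e8 0 = .a 0 := by decide
  have h1 : e8 1 = .a 1 := by decide
  have h2 : e8 2 = .a 2 := by decide
  have h3 : e8 3 = .a 3 := by decide
  have h4 : e8 4 = .xa 0 := by decide
  have h5 : e8 5 = .xa 1 := by decide
  have h6 : e8 6 = .xa 2 := by decide
  have h7 : e8 7 = .xa 3 := by decide
  rw [h0, h1, h2, h3, h4, h5, h6, h7]

lemma mul_coe (x y : MA) : ⇑(x * y).coeff = convE ⇑x.coeff ⇑y.coeff := by
  funext t
  have : (x * y).coeff t = ∑ b : Q8, x.coeff b * y.coeff (b⁻¹ * t) := by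
    rw [MonoidAlgebra.coeff_mul_apply_left, Finsupp.sum]
    exact Finset.sum_subset (Finset.subset_univ _) fun b _ hb => by
      rw [Finsupp.notMem_support_iff.mp hb, zero_mul]
  rw [this, sum_expand (fun b => x.coeff b * y.coeff (b⁻¹ * t))]
  rfl

def pick (i : ZMod 4) (c0 c1 c2 c3 : ZMod 2) : ZMod 2 :=
  if i.val = 0 then c0 else if i.val = 1 then c1 else if i.val = 2 then c2 else c3

def mk (c0 c1 c2 c3 d0 d1 d2 d3 : ZMod 2) : Q8 → ZMod 2 :=
  fun t => match t with
  | .a i => pick i c0 c1 c2 c3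
  | .xa i => pick i d0 d1 d2 d3

lemma pick_eq (v : ZMod 4 → ZMod 2) (i : ZMod 4) :
    pick i (v 0) (v 1) (v 2) (v 3) = v i := by fin_cases i <;> rfl

lemma mk_coe (f : Q8 → ZMod 2) :
    mk (f (.a 0)) (f (.a 1)) (f (.a 2)) (f (.a 3))
       (f (.xa 0)) (f (.xa 1)) (f (.xa 2)) (f (.xa 3)) = f := by
  funext t
  cases t with
  | a i => exact pick_eq (fun j => f (.a j)) i
  | xa i => exact pick_eq (fun j => f (.xa j)) i

lemma smul_one_coe (s : ZMod 2) :
    ⇑(s • (1 : MA)).coeff = fun t => if t = 1 then s else 0 := by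
  funext t
  rw [MonoidAlgebra.one_def, MonoidAlgebra.smul_single', mul_one, MonoidAlgebra.coeff_single, Finsupp.single_apply]
  simp [eq_comm]

set_option maxRecDepth 100000 in
set_option maxHeartbeats 3000000 in
theorem key : ∀ c0 c1 c2 c3 d0 d1 d2 d3 : ZMod 2,
    convE (convE (mk c0 c1 c2 c3 d0 d1 d2 d3) (mk c0 c1 c2 c3 d0 d1 d2 d3))
         (convE (mk c0 c1 c2 c3 d0 d1 d2 d3) (mk c0 c1 c2 c3 d0 d1 d2 d3))
      = fun t => if t = 1 then c0+c1+c2+c3+d0+d1+d2+d3 else 0 := by decide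

lemma quarticKey (x : MA) : x * x * (x * x) = (∑ g : Q8, x.coeff g) • (1 : MA) := by
  have hk := key (x.coeff (.a 0)) (x.coeff (.a 1)) (x.coeff (.a 2)) (x.coeff (.a 3))
    (x.coeff (.xa 0)) (x.coeff (.xa 1)) (x.coeff (.xa 2)) (x.coeff (.xa 3))
  rw [mk_coe ⇑x.coeff] at hk
  have h1 : ⇑(x * x * (x * x)).coeff = ⇑((∑ g : Q8, x.coeff g) • (1 : MA)).coeff := by
    rw [mul_coe, mul_coe, hk, smul_one_coe, sum_expand (fun g => x.coeff g)]
  exact MonoidAlgebra.ext (Finsupp.ext fun t => congrFun h1 t)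

end Z2Q8Aux

theorem z2_q8_unit_iff_zero_divisor_iff
    (x : MonoidAlgebra (ZMod 2) (QuaternionGroup 2)) :
    (IsUnit x ↔ ∑ g : QuaternionGroup 2, x.coeff g = 1) ∧
    ((x = 0 ∨ ∃ y : MonoidAlgebra (ZMod 2) (QuaternionGroup 2), y ≠ 0 ∧ x * y = 0) ↔
      ∑ g : QuaternionGroup 2, x.coeff g = 0) := by
  have hq := Z2Q8Aux.quarticKey x
  have hzmod : ∀ a : ZMod 2, a ≠ 0 → a = 1 := by decide
  have hzmod' : ∀ a : ZMod 2, a ≠ 1 → a = 0 := by decide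
  have hunit : IsUnit x ↔ ∑ g : QuaternionGroup 2, x.coeff g = 1 := by
    constructor
    · intro h
      by_contra hne
      rw [hzmod' _ hne, zero_smul] at hq
      exact not_isUnit_zero (hq ▸ ((h.mul h).mul (h.mul h)))
    · intro h
      rw [h, one_smul] at hq
      have hassoc : x * (x * (x * x)) = x * x * (x * x) := by noncomm_ring
      have hassoc' : x * (x * x) * x = x * x * (x * x) := by noncomm_ring
      exact isUnit_iff_exists.mpr ⟨x * (x * x), hassoc.trans hq, hassoc'.trans hq⟩
  refine ⟨hunit, ?_, ?_⟩
  · rintro (rfl | ⟨y, hy, hxy⟩)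
    · simp
    · by_contra hne
      have hu : IsUnit x := hunit.mpr (hzmod _ hne)
      obtain ⟨u, rfl⟩ := hu
      exact hy (by simpa using congrArg (fun z => (↑u⁻¹ : Z2Q8Aux.MA) * z) hxy)
  · intro h
    rw [h, zero_smul] at hq
    by_cases hx0 : x = 0
    · exact Or.inl hx0
    by_cases hx2 : x * x = 0
    · exact Or.inr ⟨x, hx0, hx2⟩
    by_cases hx3 : x * (x * x) = 0
    · exact Or.inr ⟨x * x, hx2, hx3⟩
    · exact Or.inr ⟨x * (x * x), hx3, by
        have hassoc : x * (x * (x * x)) = x * x * (x * x) := by noncomm_ring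
        exact hassoc.trans hq⟩
end

section
/- Let G be a group, H a subgroup, K an associative ring with 1, and let T be a set of representatives for the left cosets of H in G. Then the family of elements {u·(h - 1) : u ∈ T, h ∈ H, h ≠ 1} of the group ring K[G] is linearly independent over K. -/
/-- The elements `u * (h - 1)` for `u` in a left transversal `T` of `H` and
`1 ≠ h ∈ H` are linearly independent over `K` in the group ring `K[G]`. -/
theorem transversal_family_linearIndependent
    (G : Type*) [Group G] (H : Subgroup G) (K : Type*) [Ring K]
    (T : Set G) (hT : ∀ g : G, ∃! u, u ∈ T ∧ u⁻¹ * g ∈ H) :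
    LinearIndependent K
      (fun p : T × {h : H // h ≠ 1} =>
        MonoidAlgebra.of K G (p.1 : G) *
          (MonoidAlgebra.of K G ((p.2 : H) : G) - 1)) := by
  classical
  set ι := T × {h : H // h ≠ 1}
  set a : ι → G := fun p => (p.1 : G) * ((p.2 : H) : G) with ha
  have uniq : ∀ u u' : G, u ∈ T → u' ∈ T → u⁻¹ * u' ∈ H → u = u' := by
    intro u u' hu hu' hmem
    obtain ⟨w, hw, hwu⟩ := hT u'
    have h1 : u = w := hwu u ⟨hu, hmem⟩
    have h2 : u' = w := hwu u' ⟨hu', by simpa using H.one_mem⟩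
    rw [h1, h2]
  have key1 : ∀ p : ι, a p ∉ T := by
    rintro ⟨⟨u, hu⟩, ⟨h, hh⟩⟩ hmem
    have h1 : u = u * (h : G) := by
      refine uniq u (u * (h : G)) hu hmem ?_
      simpa [mul_assoc] using h.2
    have : (h : G) = 1 := mul_eq_left.mp h1.symm
    exact hh (by ext; simpa using this)
  have key2 : Function.Injective a := by
    rintro ⟨⟨u, hu⟩, ⟨h, hh⟩⟩ ⟨⟨u', hu'⟩, ⟨h', hh'⟩⟩ heq
    simp only [ha] at heq
    have huu' : u = u' := by
      refine uniq u u' hu hu' ?_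
      have hx : u⁻¹ * u' = (h : G) * ((h' : G))⁻¹ := by
        have := congrArg (fun x => u⁻¹ * x * ((h' : G))⁻¹) heq.symm
        simpa [mul_assoc] using this
      rw [hx]; exact H.mul_mem h.2 (H.inv_mem h'.2)
    subst huu'
    have hhh : (h : G) = h' := mul_left_cancel heq
    have : h = h' := Subtype.ext hhh
    subst this
    rfl
  have hfun : ∀ p : ι, MonoidAlgebra.of K G (p.1 : G) *
      (MonoidAlgebra.of K G ((p.2 : H) : G) - 1)
      = MonoidAlgebra.single (a p) (1 : K) - MonoidAlgebra.single (p.1 : G) 1 := by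
    intro p
    rw [mul_sub, mul_one]
    simp [MonoidAlgebra.of_apply, MonoidAlgebra.single_mul_single, MonoidAlgebra.one_def, ha]
  rw [linearIndependent_iff']
  intro s g hsum q hq
  have h0 : (0 : MonoidAlgebra K G).coeff (a q) = 0 := rfl
  rw [← hsum] at h0
  have hexp : (∑ i ∈ s, g i • (MonoidAlgebra.of K G (i.1 : G) *
      (MonoidAlgebra.of K G ((i.2 : H) : G) - 1))).coeff (a q)
      = ∑ i ∈ s, g i * ((if a i = a q then (1:K) else 0) - (if (i.1 : G) = a q then (1:K) else 0)) := by
    rw [MonoidAlgebra.coeff_sum, ← Finsupp.applyAddHom_apply, map_sum]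
    refine Finset.sum_congr rfl fun i _ => ?_
    rw [hfun i, Finsupp.applyAddHom_apply, MonoidAlgebra.coeff_smul, MonoidAlgebra.coeff_sub,
      MonoidAlgebra.coeff_single, MonoidAlgebra.coeff_single, Finsupp.smul_apply, Finsupp.sub_apply,
      Finsupp.single_apply, Finsupp.single_apply, smul_eq_mul]
  rw [hexp] at h0
  have hsimp : ∀ i ∈ s, g i * ((if a i = a q then (1:K) else 0) - (if (i.1 : G) = a q then (1:K) else 0))
      = if i = q then g i else 0 := by
    intro i _
    rw [if_neg (fun h : (i.1 : G) = a q => key1 q (h ▸ i.1.2))]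
    by_cases hiq : i = q
    · subst hiq; simp
    · rw [if_neg (fun h : a i = a q => hiq (key2 h))]; simp [hiq]
  rw [Finset.sum_congr rfl hsimp, Finset.sum_ite_eq' s q g] at h0
  simpa [hq] using h0
end
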